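/- Let 𝓘 : Fin m → Finset ℕ be an abstract network, (T,ι) a contraction tree for 𝓘 of rank r and height H, Λ a feasibility assignment on the leaves of T, ε > 0 a real number, and Λ̂ an ε-simulation of Λ on (T,ι). Assume that every tensor in every set Λ̂(u) has all entries of modulus at most 1, that for every node u, every partial simulation λ̂ of Λ rooted at u, and every node u' of T[u], the tensor λ̂(u') has all entries of modulus at most 1, and that ε·(3·d^{2r}+1)^H ≤ 1. Then for every node u of T and every partial simulation λ̂ of Λ rooted at u, there exists a tensor g ∈ Λ̂(u) with ‖λ̂(u) − g‖ ≤ ε·(3·d^{2r}+1)^{height(u)}, where height(u) denotes the height of the subtree T[u]. -/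

import Mathlib

/-- Rooted binary trees in which every internal node has exactly two children,
with leaves labeled by elements of `α`. -/
inductive BTree (α : Type) : Type
  | leaf (a : α) : BTree α
  | node (l r : BTree α) : BTree α

namespace BTree

variable {α : Type}

/-- The list of leaf labels of a binary tree. -/
def leaves : BTree α → List α
  | leaf a => [a]
  | node l r => l.leaves ++ r.leaves

/-- The height of a binary tree: maximum number of edges on a root-to-leaf path. -/
def height : BTree α → ℕ
  | leaf _ => 0
  | node l r => max l.height r.height + 1

/-- The list of all subtrees (i.e. nodes) of a binary tree. -/
def subtrees : BTree α → List (BTree α)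
  | leaf a => [leaf a]
  | node l r => node l r :: (l.subtrees ++ r.subtrees)

end BTree

/-- An abstract network: every index occurring in the family belongs to exactly
two members of the family. -/
def IsAbstractNetwork {m : ℕ} (I : Fin m → Finset ℕ) : Prop :=
  ∀ i : ℕ, (∃ j : Fin m, i ∈ I j) →
    (Finset.univ.filter fun j : Fin m => i ∈ I j).card = 2

/-- The index set `ι(u)` attached to the node `u` of a contraction tree for `I`. -/
def iota {m : ℕ} (I : Fin m → Finset ℕ) : BTree (Fin m) → Finset ℕ
  | .leaf j => I j
  | .node l r => symmDiff (iota I l) (iota I r)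

/-- `(T, ι)` is a contraction tree for the abstract network `I`: the leaves of `T` are
labeled bijectively with the members of the family, and at every internal node the
index sets of the two children intersect. -/
def IsContractionTree {m : ℕ} (I : Fin m → Finset ℕ) (T : BTree (Fin m)) : Prop :=
  T.leaves.Nodup ∧ (∀ j : Fin m, j ∈ T.leaves) ∧
  ∀ l r : BTree (Fin m), BTree.node l r ∈ T.subtrees →
    ((iota I l) ∩ (iota I r)).Nonempty

/-- The rank of the contraction tree `(T, ι)`: the maximum of `|ι(u)|` over nodes `u`. -/
def rankOf {m : ℕ} (I : Fin m → Finset ℕ) (T : BTree (Fin m)) : ℕ :=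
  (T.subtrees.map fun u => (iota I u).card).foldr max 0

/-- A `d`-state tensor, given by its entries on assignments of a pair of values in
`Fin d` to every possible index; a tensor *with index set* `I` is one whose entries
depend only on the values assigned to the indices in `I` (see `HasIndexSet`). -/
abbrev Tensor (d : ℕ) : Type := (ℕ → Fin d × Fin d) → ℂ

/-- `g` is a tensor with index set `I`: its entries depend only on the indices in `I`. -/
def HasIndexSet {d : ℕ} (g : Tensor d) (I : Finset ℕ) : Prop :=
  ∀ σ τ : ℕ → Fin d × Fin d, (∀ x ∈ I, σ x = τ x) → g σ = g τ

/-- The norm of a tensor: the supremum of the moduli of its entries. -/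
noncomputable def tnorm {d : ℕ} (g : Tensor d) : ℝ := ⨆ σ, ‖g σ‖

/-- The contraction of two tensors over the shared index set `L`. -/
noncomputable def contr {d : ℕ} (L : Finset ℕ) (g g' : Tensor d) : Tensor d :=
  fun σ => ∑ τ : ↥L → Fin d × Fin d,
    g (fun x => if h : x ∈ L then τ ⟨x, h⟩ else σ x) *
    g' (fun x => if h : x ∈ L then τ ⟨x, h⟩ else σ x)

/-- A partial simulation of the feasibility assignment `Λ` rooted at the node `u`:
an assignment of a tensor to each node of the subtree `T[u]` that picks a member of
`Λ` at each leaf and is the contraction of the children's tensors (over their shared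
index set) at each internal node. -/
def IsPartialSim {d m : ℕ} (I : Fin m → Finset ℕ) (Λ : Fin m → Finset (Tensor d))
    (u : BTree (Fin m)) (lam : BTree (Fin m) → Tensor d) : Prop :=
  (∀ j : Fin m, BTree.leaf j ∈ u.subtrees → lam (BTree.leaf j) ∈ Λ j) ∧
  (∀ l r : BTree (Fin m), BTree.node l r ∈ u.subtrees →
    lam (BTree.node l r) = contr ((iota I l) ∩ (iota I r)) (lam l) (lam r))

/-- An `ε`-simulation of the feasibility assignment `Λ` on the contraction tree `T`:
each node carries a finite set of tensors, agreeing with `Λ` at the leaves; at every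
internal node, every tensor of the node is `ε`-close to the contraction of some pair
of tensors of the children, and conversely the contraction of every pair of tensors
of the children is `ε`-close to some tensor of the node. -/
def IsEpsSim {d m : ℕ} (I : Fin m → Finset ℕ) (Λ : Fin m → Finset (Tensor d))
    (T : BTree (Fin m)) (ε : ℝ) (L : BTree (Fin m) → Finset (Tensor d)) : Prop :=
  (∀ j : Fin m, BTree.leaf j ∈ T.subtrees → L (BTree.leaf j) = Λ j) ∧
  (∀ l r : BTree (Fin m), BTree.node l r ∈ T.subtrees →
    (∀ g ∈ L (BTree.node l r), ∃ gl ∈ L l, ∃ gr ∈ L r,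
        tnorm (g - contr ((iota I l) ∩ (iota I r)) gl gr) ≤ ε) ∧
    (∀ gl ∈ L l, ∀ gr ∈ L r, ∃ g ∈ L (BTree.node l r),
        tnorm (g - contr ((iota I l) ∩ (iota I r)) gl gr) ≤ ε))

section Aux

variable {α : Type}

lemma le_foldr_max : ∀ {l : List ℕ} {a : ℕ}, a ∈ l → a ≤ l.foldr max 0
  | b :: t, a, h => by
    rcases List.mem_cons.1 h with rfl | h
    · exact le_max_left _ _
    · exact le_trans (le_foldr_max h) (le_max_right _ _)

lemma BTree.self_mem_subtrees (u : BTree α) : u ∈ u.subtrees := by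
  cases u <;> simp [BTree.subtrees]

lemma BTree.subtrees_trans : ∀ {T u v : BTree α},
    u ∈ T.subtrees → v ∈ u.subtrees → v ∈ T.subtrees
  | .leaf a, u, v, hu, hv => by
    simp [BTree.subtrees] at hu; subst hu; exact hv
  | .node l r, u, v, hu, hv => by
    simp only [BTree.subtrees, List.mem_cons, List.mem_append] at hu ⊢
    rcases hu with rfl | hu | hu
    · simp only [BTree.subtrees, List.mem_cons, List.mem_append] at hv
      exact hv
    · exact Or.inr (Or.inl (BTree.subtrees_trans hu hv))
    · exact Or.inr (Or.inr (BTree.subtrees_trans hu hv))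

lemma BTree.left_mem_subtrees {l r : BTree α} : l ∈ (BTree.node l r).subtrees := by
  simp [BTree.subtrees, BTree.self_mem_subtrees]

lemma BTree.right_mem_subtrees {l r : BTree α} : r ∈ (BTree.node l r).subtrees := by
  simp [BTree.subtrees, BTree.self_mem_subtrees]

lemma card_le_rank {m : ℕ} (I : Fin m → Finset ℕ) (T u : BTree (Fin m))
    (hu : u ∈ T.subtrees) : (iota I u).card ≤ rankOf I T :=
  le_foldr_max (List.mem_map_of_mem hu)

lemma tnorm_le {d : ℕ} (hd : 1 ≤ d) (g : Tensor d) {C : ℝ}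
    (h : ∀ σ, ‖g σ‖ ≤ C) : tnorm g ≤ C := by
  have : Nonempty (ℕ → Fin d × Fin d) := ⟨fun _ => (⟨0, hd⟩, ⟨0, hd⟩)⟩
  exact ciSup_le h

lemma abs_le_tnorm {d : ℕ} (g : Tensor d) {C : ℝ}
    (h : ∀ σ, ‖g σ‖ ≤ C) (σ : ℕ → Fin d × Fin d) :
    ‖g σ‖ ≤ tnorm g :=
  le_ciSup ⟨C, by rintro x ⟨τ, rfl⟩; exact h τ⟩ σ

lemma cabs_sub_le (x y : ℂ) : ‖x - y‖ ≤ ‖x‖ + ‖y‖ := by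
  simpa [sub_eq_add_neg] using norm_add_le x (-y)

lemma contr_abs_le {d : ℕ} (K : Finset ℕ) (a b : Tensor d)
    (ha : ∀ σ, ‖a σ‖ ≤ 1) (hb : ∀ σ, ‖b σ‖ ≤ 1)
    (σ : ℕ → Fin d × Fin d) :
    ‖contr K a b σ‖ ≤ (d : ℝ) ^ (2 * K.card) := by
  have hcard : (Fintype.card (↥K → Fin d × Fin d) : ℝ) = (d : ℝ) ^ (2 * K.card) := by
    rw [Fintype.card_fun, Fintype.card_prod, Fintype.card_fin, Fintype.card_coe]
    push_cast
    ring
  calc ‖contr K a b σ‖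
      ≤ ∑ τ : ↥K → Fin d × Fin d, ‖a (fun x => if h : x ∈ K then τ ⟨x, h⟩ else σ x) *
           b (fun x => if h : x ∈ K then τ ⟨x, h⟩ else σ x)‖ :=
        norm_sum_le _ _
    _ ≤ ∑ _τ : ↥K → Fin d × Fin d, (1 : ℝ) := by
        refine Finset.sum_le_sum fun τ _ => ?_
        rw [norm_mul]
        exact mul_le_one₀ (ha _) (norm_nonneg _) (hb _)
    _ = (d : ℝ) ^ (2 * K.card) := by rw [Finset.sum_const, Finset.card_univ,
        nsmul_eq_mul, mul_one, hcard]

lemma contr_diff_le {d : ℕ} (K : Finset ℕ) (a a' b b' : Tensor d)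
    (ha' : ∀ σ, ‖a' σ‖ ≤ 1) (hb : ∀ σ, ‖b σ‖ ≤ 1)
    {δl δr : ℝ}
    (hδl : ∀ σ, ‖a σ - a' σ‖ ≤ δl)
    (hδr : ∀ σ, ‖b σ - b' σ‖ ≤ δr)
    (σ : ℕ → Fin d × Fin d) :
    ‖contr K a b σ - contr K a' b' σ‖ ≤
      (d : ℝ) ^ (2 * K.card) * (δl + δr) := by
  have hcard : (Fintype.card (↥K → Fin d × Fin d) : ℝ) = (d : ℝ) ^ (2 * K.card) := by
    rw [Fintype.card_fun, Fintype.card_prod, Fintype.card_fin, Fintype.card_coe]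
    push_cast
    ring
  have key : contr K a b σ - contr K a' b' σ =
      ∑ τ : ↥K → Fin d × Fin d,
        ((a (fun x => if h : x ∈ K then τ ⟨x, h⟩ else σ x) -
          a' (fun x => if h : x ∈ K then τ ⟨x, h⟩ else σ x)) *
          b (fun x => if h : x ∈ K then τ ⟨x, h⟩ else σ x) +
         a' (fun x => if h : x ∈ K then τ ⟨x, h⟩ else σ x) *
          (b (fun x => if h : x ∈ K then τ ⟨x, h⟩ else σ x) -
           b' (fun x => if h : x ∈ K then τ ⟨x, h⟩ else σ x))) := by
    rw [contr, contr, ← Finset.sum_sub_distrib]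
    exact Finset.sum_congr rfl fun τ _ => by ring
  rw [key]
  have hterm : ∀ τ : ↥K → Fin d × Fin d,
      ‖(a (fun x => if h : x ∈ K then τ ⟨x, h⟩ else σ x) -
          a' (fun x => if h : x ∈ K then τ ⟨x, h⟩ else σ x)) *
          b (fun x => if h : x ∈ K then τ ⟨x, h⟩ else σ x) +
         a' (fun x => if h : x ∈ K then τ ⟨x, h⟩ else σ x) *
          (b (fun x => if h : x ∈ K then τ ⟨x, h⟩ else σ x) -
           b' (fun x => if h : x ∈ K then τ ⟨x, h⟩ else σ x))‖ ≤ δl + δr := by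
    intro τ
    set σ' : ℕ → Fin d × Fin d := fun x => if h : x ∈ K then τ ⟨x, h⟩ else σ x with hσ'
    refine le_trans (norm_add_le _ _) (add_le_add ?_ ?_)
    · rw [norm_mul]
      have h1 := hδl σ'
      have h2 := hb σ'
      have h3 := norm_nonneg (a σ' - a' σ')
      have h4 := norm_nonneg (b σ')
      nlinarith
    · rw [norm_mul]
      have h1 := hδr σ'
      have h2 := ha' σ'
      have h3 := norm_nonneg (b σ' - b' σ')
      have h4 := norm_nonneg (a' σ')
      nlinarith
  refine le_trans (norm_sum_le _ _) (le_trans (Finset.sum_le_sum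
    fun τ _ => hterm τ) ?_)
  rw [Finset.sum_const, Finset.card_univ, nsmul_eq_mul, hcard]

end Aux

/-- Under the stated boundedness assumptions, for every node `u` of
the contraction tree and every partial simulation `lam` of `Λ` rooted at `u`, some
tensor of the `ε`-simulation at `u` is `ε·(3d^(2r)+1)^height(u)`-close to `lam u`. -/
theorem statement_11
    (d m : ℕ) (hd : 1 ≤ d)
    (I : Fin m → Finset ℕ) (hnet : IsAbstractNetwork I)
    (T : BTree (Fin m)) (hT : IsContractionTree I T)
    (r H : ℕ) (hrank : rankOf I T = r) (hheight : T.height = H)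
    (Λ : Fin m → Finset (Tensor d))
    (hΛ : ∀ j : Fin m, (Λ j).Nonempty ∧ ∀ g ∈ Λ j, HasIndexSet g (I j))
    (ε : ℝ) (hε : 0 < ε)
    (L : BTree (Fin m) → Finset (Tensor d)) (hsim : IsEpsSim I Λ T ε L)
    (hidx : ∀ u ∈ T.subtrees, ∀ g ∈ L u, HasIndexSet g (iota I u))
    (hb1 : ∀ u ∈ T.subtrees, ∀ g ∈ L u, ∀ σ, ‖g σ‖ ≤ 1)
    (hb2 : ∀ u ∈ T.subtrees, ∀ lam : BTree (Fin m) → Tensor d,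
      IsPartialSim I Λ u lam → ∀ u2 ∈ u.subtrees, ∀ σ, ‖lam u2 σ‖ ≤ 1)
    (hsmall : ε * (3 * (d : ℝ) ^ (2 * r) + 1) ^ H ≤ 1) :
    ∀ u ∈ T.subtrees, ∀ lam : BTree (Fin m) → Tensor d, IsPartialSim I Λ u lam →
      ∃ g ∈ L u, tnorm (lam u - g) ≤ ε * (3 * (d : ℝ) ^ (2 * r) + 1) ^ u.height := by
  intro u
  induction u with
  | leaf j =>
    intro hu lam hlam
    have hmem : lam (BTree.leaf j) ∈ Λ j :=
      hlam.1 j (BTree.self_mem_subtrees _)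
    refine ⟨lam (BTree.leaf j), by rw [hsim.1 j hu]; exact hmem, ?_⟩
    have h0 : ∀ σ, ‖(lam (BTree.leaf j) - lam (BTree.leaf j)) σ‖ ≤
        ε * (3 * (d : ℝ) ^ (2 * r) + 1) ^ (BTree.leaf j).height := by
      intro σ
      simp only [Pi.sub_apply, sub_self, norm_zero, BTree.height, pow_zero, mul_one]
      exact hε.le
    exact tnorm_le hd _ h0
  | node lc rc ihl ihr =>
    intro hu lam hlam
    have hl : lc ∈ T.subtrees := BTree.subtrees_trans hu BTree.left_mem_subtrees
    have hr : rc ∈ T.subtrees := BTree.subtrees_trans hu BTree.right_mem_subtrees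
    have hlaml : IsPartialSim I Λ lc lam :=
      ⟨fun j hj => hlam.1 j (BTree.subtrees_trans BTree.left_mem_subtrees hj),
       fun lc' rc' h => hlam.2 lc' rc' (BTree.subtrees_trans BTree.left_mem_subtrees h)⟩
    have hlamr : IsPartialSim I Λ rc lam :=
      ⟨fun j hj => hlam.1 j (BTree.subtrees_trans BTree.right_mem_subtrees hj),
       fun lc' rc' h => hlam.2 lc' rc' (BTree.subtrees_trans BTree.right_mem_subtrees h)⟩
    obtain ⟨gl, hgl, hδl⟩ := ihl hl lam hlaml
    obtain ⟨gr, hgr, hδr⟩ := ihr hr lam hlamr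
    obtain ⟨g, hg, hgc⟩ := (hsim.2 lc rc hu).2 gl hgl gr hgr
    refine ⟨g, hg, ?_⟩
    set K := iota I lc ∩ iota I rc with hK
    set X : ℝ := (d : ℝ) ^ (2 * r) with hX
    set B : ℝ := 3 * X + 1 with hB
    -- pointwise bounds
    have hbl1 : ∀ σ, ‖lam lc σ‖ ≤ 1 :=
      hb2 _ hu lam hlam lc BTree.left_mem_subtrees
    have hbr1 : ∀ σ, ‖lam rc σ‖ ≤ 1 :=
      hb2 _ hu lam hlam rc BTree.right_mem_subtrees
    have hgl1 : ∀ σ, ‖gl σ‖ ≤ 1 := hb1 lc hl gl hgl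
    have hgr1 : ∀ σ, ‖gr σ‖ ≤ 1 := hb1 rc hr gr hgr
    have hg1 : ∀ σ, ‖g σ‖ ≤ 1 := hb1 _ hu g hg
    -- pointwise difference bounds from the induction hypotheses
    have hδlσ : ∀ σ, ‖lam lc σ - gl σ‖ ≤ ε * B ^ lc.height := fun σ =>
      le_trans (abs_le_tnorm (lam lc - gl)
        (C := 2) (fun τ => by
          simpa [Pi.sub_apply] using
            le_trans (cabs_sub_le _ _)
              (by linarith [hbl1 τ, hgl1 τ] : ‖lam lc τ‖ +
                ‖gl τ‖ ≤ 2)) σ) hδl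
    have hδrσ : ∀ σ, ‖lam rc σ - gr σ‖ ≤ ε * B ^ rc.height := fun σ =>
      le_trans (abs_le_tnorm (lam rc - gr)
        (C := 2) (fun τ => by
          simpa [Pi.sub_apply] using
            le_trans (cabs_sub_le _ _)
              (by linarith [hbr1 τ, hgr1 τ] : ‖lam rc τ‖ +
                ‖gr τ‖ ≤ 2)) σ) hδr
    -- bound on g - contr gl gr, pointwise
    have hcontr_bd : ∀ σ, ‖contr K gl gr σ‖ ≤ (d : ℝ) ^ (2 * K.card) :=
      contr_abs_le K gl gr hgl1 hgr1
    have hgcσ : ∀ σ, ‖g σ - contr K gl gr σ‖ ≤ ε := fun σ =>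
      le_trans (abs_le_tnorm (g - contr K gl gr)
        (C := 1 + (d : ℝ) ^ (2 * K.card)) (fun τ => by
          simpa [Pi.sub_apply] using
            le_trans (cabs_sub_le _ _)
              (add_le_add (hg1 τ) (hcontr_bd τ))) σ) hgc
    -- exponent bound
    have hKr : K.card ≤ r := by
      calc K.card ≤ (iota I lc).card := Finset.card_le_card Finset.inter_subset_left
        _ ≤ rankOf I T := card_le_rank I T lc hl
        _ = r := hrank
    have hdX : (d : ℝ) ^ (2 * K.card) ≤ X := by
      exact pow_le_pow_right₀ (by exact_mod_cast hd) (by omega)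
    -- contraction difference bound
    have hmain : ∀ σ, ‖contr K (lam lc) (lam rc) σ - contr K gl gr σ‖ ≤
        (d : ℝ) ^ (2 * K.card) * (ε * B ^ lc.height + ε * B ^ rc.height) :=
      contr_diff_le K (lam lc) gl (lam rc) gr hgl1 hbr1 hδlσ hδrσ
    -- the value of lam at the node
    have hval : lam (BTree.node lc rc) = contr K (lam lc) (lam rc) :=
      hlam.2 lc rc (BTree.self_mem_subtrees _)
    refine tnorm_le hd _ fun σ => ?_
    have step : ‖(lam (BTree.node lc rc) - g) σ‖ ≤
        (d : ℝ) ^ (2 * K.card) * (ε * B ^ lc.height + ε * B ^ rc.height) + ε := by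
      have : (lam (BTree.node lc rc) - g) σ =
          (contr K (lam lc) (lam rc) σ - contr K gl gr σ) -
          (g σ - contr K gl gr σ) := by
        rw [Pi.sub_apply, hval]; ring
      rw [this]
      exact le_trans (cabs_sub_le _ _) (add_le_add (hmain σ) (hgcσ σ))
    refine le_trans step ?_
    -- arithmetic
    have hX1 : (1 : ℝ) ≤ X := one_le_pow₀ (by exact_mod_cast hd)
    have hB1 : (1 : ℝ) ≤ B := by linarith
    have hBh : (1 : ℝ) ≤ B ^ (max lc.height rc.height) := one_le_pow₀ hB1
    have hBl : B ^ lc.height ≤ B ^ (max lc.height rc.height) :=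
      pow_le_pow_right₀ hB1 (le_max_left _ _)
    have hBr : B ^ rc.height ≤ B ^ (max lc.height rc.height) :=
      pow_le_pow_right₀ hB1 (le_max_right _ _)
    have hheight' : (BTree.node lc rc).height = max lc.height rc.height + 1 := rfl
    rw [hheight', pow_succ]
    have hdXnn : (0 : ℝ) ≤ (d : ℝ) ^ (2 * K.card) := by positivity
    set P := B ^ (max lc.height rc.height) with hP
    calc (d : ℝ) ^ (2 * K.card) * (ε * B ^ lc.height + ε * B ^ rc.height) + ε
        ≤ X * (ε * P + ε * P) + ε := by
          refine add_le_add_left (mul_le_mul hdX ?_ (by positivity) (by linarith)) ε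
          exact add_le_add (by nlinarith) (by nlinarith)
      _ ≤ ε * (P * B) := by
          rw [hB]
          have h5 : (1 : ℝ) ≤ X * P := by nlinarith
          have h6 : ε ≤ ε * (X * P) := le_mul_of_one_le_right hε.le h5
          have h7 : (0 : ℝ) ≤ ε * P := mul_nonneg hε.le (by linarith)
          nlinarith
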